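/- Let P be a nonzero real symmetric n×n matrix with P² = P (an orthogonal projector), H a symmetric n×n matrix, and σ ∈ ℝ. If σ ≥ ‖P(H − σI)‖₂ (operator 2-norm), then σ ≥ ½·max{λ_max(PHP), 0}, where λ_max denotes the largest eigenvalue. -/

import Mathlib

open Matrix

/-- The operator 2-norm of a real matrix: the norm of the induced linear map between
Euclidean spaces. -/
noncomputable def opNorm2 {n m : ℕ} (A : Matrix (Fin n) (Fin m) ℝ) : ℝ :=
  ‖LinearMap.toContinuousLinearMap (Matrix.toEuclideanLin A)‖

/-- For a nonzero orthogonal projector `P` and symmetric `H`: if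
`σ ≥ ‖P(H − σI)‖₂`, then `σ ≥ ½·max{λ_max(PHP), 0}`, where `λ_max(PHP)` is the largest
eigenvalue of `PHP` (formalized via `IsGreatest` of the set of eigenvalues). -/
theorem fletcher_threshold_from_norm_bound
    {n : ℕ} (P H : Matrix (Fin n) (Fin n) ℝ)
    (hP0 : P ≠ 0) (hPsymm : P.IsSymm) (hPproj : P * P = P) (hHsymm : H.IsSymm)
    (σ μ : ℝ)
    (hμ : IsGreatest {r : ℝ | ∃ v : Fin n → ℝ, v ≠ 0 ∧ (P * H * P).mulVec v = r • v} μ)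
    (hσ : opNorm2 (P * (H - σ • 1)) ≤ σ) :
    max μ 0 / 2 ≤ σ := by
  have hσ0 : 0 ≤ σ := le_trans (norm_nonneg _) hσ
  obtain ⟨⟨v, hv0, hv⟩, -⟩ := hμ
  rcases le_or_gt μ 0 with hμ0 | hμ0
  · rw [max_eq_right hμ0]; linarith
  · rw [max_eq_left hμ0.le]
    -- P v = v
    have hPv : P.mulVec v = v := by
      have h2 : P.mulVec ((P * H * P).mulVec v) = (P * H * P).mulVec v := by
        rw [Matrix.mulVec_mulVec, ← mul_assoc, ← mul_assoc, hPproj]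
      rw [hv, Matrix.mulVec_smul] at h2
      exact smul_right_injective _ (ne_of_gt hμ0) h2
    have hPH : (P * H).mulVec v = μ • v := by
      conv_lhs => rw [← hPv, Matrix.mulVec_mulVec, mul_assoc]
      rw [← mul_assoc, hv]
    have hM : (P * (H - σ • 1)).mulVec v = (μ - σ) • v := by
      have h3 : P * (H - σ • 1) = P * H - σ • P := by
        rw [mul_sub, Matrix.mul_smul, mul_one]
      rw [h3, Matrix.sub_mulVec, Matrix.smul_mulVec, hPH, hPv, sub_smul]
    -- norm bound
    set M := P * (H - σ • 1) with hMdef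
    have key : ‖((WithLp.equiv 2 (Fin n → ℝ)).symm (M.mulVec v) : EuclideanSpace ℝ (Fin n))‖
        ≤ σ * ‖((WithLp.equiv 2 (Fin n → ℝ)).symm v : EuclideanSpace ℝ (Fin n))‖ := by
      have h := (LinearMap.toContinuousLinearMap (Matrix.toEuclideanLin M)).le_opNorm
        ((WithLp.equiv 2 (Fin n → ℝ)).symm v)
      simp only [LinearMap.coe_toContinuousLinearMap', WithLp.equiv_symm_apply, Matrix.toEuclideanLin_apply_piLp_toLp] at h
      exact h.trans (mul_le_mul_of_nonneg_right hσ (norm_nonneg _))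
    rw [hM, (show (WithLp.equiv 2 (Fin n → ℝ)).symm ((μ - σ) • v) = (μ - σ) • (WithLp.equiv 2 (Fin n → ℝ)).symm v from rfl), norm_smul, Real.norm_eq_abs] at key
    have hvpos : (0:ℝ) < ‖((WithLp.equiv 2 (Fin n → ℝ)).symm v : EuclideanSpace ℝ (Fin n))‖ := by
      rw [norm_pos_iff]
      simpa using hv0
    have habs : |μ - σ| ≤ σ := le_of_mul_le_mul_right (by linarith [key]) hvpos
    have := (abs_le.mp habs).2
    linarith
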